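/- For posets D and E, the map sending a Scott-continuous function f : I(D) → I(E) to its graph {(a, α) | a a finite antichain of D, α ∈ f(↓a)} is a bijection between Scott-continuous functions from I(D) to I(E) and the initial segments of the poset A_f(D)^op × E. -/

import Mathlib

def FinAntichain (D : Type*) [PartialOrder D] := {a : Finset D // IsAntichain (· ≤ ·) (a : Set D)}

instance {D : Type*} [PartialOrder D] : Preorder (FinAntichain D) where
  le a b := ∀ α ∈ a.1, ∃ β ∈ b.1, α ≤ β
  le_refl a := fun α h => ⟨α, h, le_refl α⟩
  le_trans a b c hab hbc := fun α hα => by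
    obtain ⟨β, hβ, h1⟩ := hab α hα
    obtain ⟨γ, hγ, h2⟩ := hbc β hβ
    exact ⟨γ, hγ, h1.trans h2⟩

section Aux
variable {D : Type*} [PartialOrder D]

attribute [local instance] Classical.propDecidable

noncomputable def FinAntichain.reduce (t : Finset D) : FinAntichain D :=
  ⟨t.filter (fun x => ∀ y ∈ t, x ≤ y → x = y), fun x hx y hy hxy hle => by
    simp only [Finset.coe_filter, Set.mem_setOf_eq] at hx hy
    exact hxy (hx.2 y hy.1 hle)⟩

lemma FinAntichain.le_reduce (t : Finset D) : ∀ x ∈ t, ∃ y ∈ (reduce t).1, x ≤ y := by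
  intro x hx
  obtain ⟨m, hm, hmax⟩ := Set.Finite.exists_maximalFor id {y ∈ (t : Set D) | x ≤ y}
    (t.finite_toSet.subset (fun y hy => hy.1)) ⟨x, hx, le_rfl⟩
  refine ⟨m, ?_, hm.2⟩
  classical
  simp only [reduce, Finset.mem_filter]
  exact ⟨hm.1, fun y hy hmy => le_antisymm hmy (hmax ⟨hy, hm.2.trans hmy⟩ hmy)⟩

lemma FinAntichain.reduce_lowerClosure (t : Finset D) :
    lowerClosure ((reduce t).1 : Set D) = lowerClosure (t : Set D) := by
  apply le_antisymm
  · exact lowerClosure_mono (by intro x hx; exact (Finset.mem_filter.mp hx).1)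
  · rw [lowerClosure_le]
    intro x hx
    obtain ⟨y, hy, hxy⟩ := le_reduce t x hx
    exact ⟨y, hy, hxy⟩

noncomputable def emptyAC : FinAntichain D := ⟨∅, by intro x hx; simp at hx⟩

/-- The directed family of lower closures of finite antichains below `S`. -/
def acFam (S : LowerSet D) : Set (LowerSet D) :=
  (fun a : FinAntichain D => lowerClosure (a.1 : Set D)) '' {a | lowerClosure (a.1 : Set D) ≤ S}

lemma acFam_nonempty (S : LowerSet D) : (acFam S).Nonempty :=
  ⟨lowerClosure ((emptyAC (D := D)).1 : Set D), ⟨emptyAC, by show lowerClosure _ ≤ S; simp [emptyAC], rfl⟩⟩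

lemma acFam_directed (S : LowerSet D) : DirectedOn (· ≤ ·) (acFam S) := by
  rintro _ ⟨a, ha, rfl⟩ _ ⟨b, hb, rfl⟩
  simp only [Set.mem_setOf_eq] at ha hb
  refine ⟨lowerClosure (((FinAntichain.reduce (a.1 ∪ b.1)).1 : Finset D) : Set D), ⟨_, ?_, rfl⟩, ?_, ?_⟩
  · simp only [Set.mem_setOf_eq, FinAntichain.reduce_lowerClosure, Finset.coe_union,
      lowerClosure_union]
    exact sup_le ha hb
  · rw [FinAntichain.reduce_lowerClosure, Finset.coe_union, lowerClosure_union]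
    exact le_sup_left
  · rw [FinAntichain.reduce_lowerClosure, Finset.coe_union, lowerClosure_union]
    exact le_sup_right

lemma acFam_isLUB (S : LowerSet D) : IsLUB (acFam S) S := by
  constructor
  · rintro _ ⟨a, ha, rfl⟩; exact ha
  · intro T hT x hx
    have hsing : lowerClosure (({x} : Finset D) : Set D) ∈ acFam S := by
      refine ⟨⟨{x}, by rw [Finset.coe_singleton]; exact Set.subsingleton_singleton.isAntichain _⟩, ?_, rfl⟩
      show lowerClosure (({x} : Finset D) : Set D) ≤ S
      simp only [Set.mem_setOf_eq, Finset.coe_singleton, lowerClosure_le,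
        Set.singleton_subset_iff]
      exact hx
    have := hT hsing
    exact this (subset_lowerClosure (by simp))

lemma recon {E : Type*} [PartialOrder E] {f : LowerSet D → LowerSet E}
    (hf : ScottContinuous f) (S : LowerSet D) : f S = sSup (f '' acFam S) :=
  ((hf (acFam_nonempty S) (acFam_directed S) (acFam_isLUB S)).sSup_eq).symm

end Aux

theorem graph_bijection {D E : Type*} [PartialOrder D] [PartialOrder E] :
    ∃ Φ : {f : LowerSet D → LowerSet E // ScottContinuous f} →
        LowerSet ((FinAntichain D)ᵒᵈ × E),
      (∀ f, ((Φ f : LowerSet ((FinAntichain D)ᵒᵈ × E)) : Set ((FinAntichain D)ᵒᵈ × E)) =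
          {p | p.2 ∈ f.1 (lowerClosure (((OrderDual.ofDual p.1).1 : Finset D) : Set D))}) ∧
      Function.Bijective Φ := by
  refine ⟨fun f => ⟨{p | p.2 ∈ f.1 (lowerClosure (((OrderDual.ofDual p.1).1 : Finset D) : Set D))}, ?_⟩, fun f => rfl, ?_, ?_⟩
  · -- lower set
    rintro ⟨a, α⟩ ⟨b, β⟩ ⟨h1, h2⟩ hmem
    simp only [Set.mem_setOf_eq] at *
    have hab : lowerClosure (((OrderDual.ofDual a).1 : Finset D) : Set D) ≤
        lowerClosure (((OrderDual.ofDual b).1 : Finset D) : Set D) := by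
      rw [lowerClosure_le]
      intro x hx
      obtain ⟨y, hy, hxy⟩ := h1 x hx
      exact ⟨y, hy, hxy⟩
    exact (f.1 _).lower h2 (f.2.monotone hab hmem)
  · -- injective
    rintro ⟨f, hf⟩ ⟨g, hg⟩ h
    simp only [LowerSet.mk.injEq, Subtype.mk.injEq] at h ⊢
    have key : ∀ a : FinAntichain D, f (lowerClosure ((a.1 : Finset D) : Set D)) =
        g (lowerClosure ((a.1 : Finset D) : Set D)) := by
      intro a
      ext α
      have := Set.ext_iff.mp (congrArg LowerSet.carrier h) (OrderDual.toDual a, α)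
      simpa using this
    funext S
    rw [recon hf S, recon hg S]
    congr 1
    exact Set.image_congr (by rintro _ ⟨a, _, rfl⟩; exact key a)
  · -- surjective
    rintro G
    set fG : LowerSet D → LowerSet E := fun S =>
      ⟨{α | ∃ a : FinAntichain D, lowerClosure ((a.1 : Finset D) : Set D) ≤ S ∧
        (OrderDual.toDual a, α) ∈ G}, by
        intro α β hβα ⟨a, ha, hmem⟩
        exact ⟨a, ha, G.lower (Prod.mk_le_mk.mpr ⟨le_rfl, hβα⟩) hmem⟩⟩ with hfG
    have hmono : Monotone fG := by
      intro S T hST α ⟨a, ha, hmem⟩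
      exact ⟨a, ha.trans hST, hmem⟩
    have hsc : ScottContinuous fG := by
      intro d hne hdir S hlub
      have hS : S = sSup d := hlub.sSup_eq.symm
      subst hS
      constructor
      · rintro _ ⟨T, hT, rfl⟩
        exact hmono (le_sSup hT)
      · intro T hT α hα
        obtain ⟨a, ha, hmem⟩ := hα
        -- a.1 ⊆ sSup d, find single member
        have hsub : ((a.1 : Finset D) : Set D) ⊆ ⋃ s ∈ d, (s : Set D) := by
          intro x hx
          have : x ∈ (sSup d : LowerSet D) := ha (subset_lowerClosure hx)
          rwa [← SetLike.mem_coe, LowerSet.coe_sSup] at this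
        have hdir' : DirectedOn (fun i j : LowerSet D => (i : Set D) ⊆ (j : Set D)) d := by
          intro i hi j hj
          obtain ⟨k, hk, h1, h2⟩ := hdir i hi j hj
          exact ⟨k, hk, h1, h2⟩
        obtain ⟨S', hS', hsub'⟩ :=
          DirectedOn.exists_mem_subset_of_finset_subset_biUnion hne hdir' hsub
        have : α ∈ fG S' := ⟨a, lowerClosure_le.mpr hsub', hmem⟩
        exact hT ⟨S', hS', rfl⟩ this
    refine ⟨⟨fG, hsc⟩, ?_⟩
    apply SetLike.coe_injective
    ext ⟨a, α⟩
    simp only [Set.mem_setOf_eq]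
    constructor
    · rintro ⟨b, hb, hmem⟩
      refine G.lower ?_ hmem
      refine ⟨?_, le_rfl⟩
      show OrderDual.ofDual (OrderDual.toDual b) ≤ OrderDual.ofDual a
      intro x hx
      have : x ∈ lowerClosure (((OrderDual.ofDual a).1 : Finset D) : Set D) :=
        hb (subset_lowerClosure hx)
      exact this
    · intro hmem
      exact ⟨OrderDual.ofDual a, le_rfl, hmem⟩
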